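/- Let G be a countable group with a proper length function l and associated left-invariant metric d_l. If the metric space (G, d_l) has finite asymptotic dimension, then there exists a coarse embedding of (G, d_l) into the Hilbert space ℓ²(ℕ). -/

import Mathlib

open Filter Function Set
open scoped ENNReal

/-- A space with distance function `d` has asymptotic dimension at most `n`. -/
def AsdimLE {X : Type*} (d : X → X → ℝ) (n : ℕ) : Prop :=
  ∀ r : ℝ, 0 < r → ∃ 𝒰 : Set (Set X),
    (∀ x : X, ∃ U ∈ 𝒰, x ∈ U) ∧
    (∃ B : ℝ, ∀ U ∈ 𝒰, ∀ x ∈ U, ∀ y ∈ U, d x y ≤ B) ∧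
    (∀ x : X, {U | U ∈ 𝒰 ∧ ∃ y ∈ U, d x y ≤ r}.Finite ∧
      {U | U ∈ 𝒰 ∧ ∃ y ∈ U, d x y ≤ r}.ncard ≤ n + 1)

section Aux

variable {X : Type*} (d : X → X → ℝ)

/-- Distance from a point to a set. -/
noncomputable def dSet (x : X) (U : Set X) : ℝ := sInf (d x '' U)

/-- Bump function at scale `r` associated to a set `U`. -/
noncomputable def bump (r : ℝ) (U : Set X) (x : X) : ℝ := max 0 (1 - dSet d x U / r)

variable {d}

theorem dSet_nonneg (hdnn : ∀ x y, 0 ≤ d x y) (x : X) (U : Set X) : 0 ≤ dSet d x U :=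
  Real.sInf_nonneg (by rintro t ⟨y, -, rfl⟩; exact hdnn x y)

theorem dSet_le (hdnn : ∀ x y, 0 ≤ d x y) {x y : X} {U : Set X} (hy : y ∈ U) :
    dSet d x U ≤ d x y :=
  csInf_le ⟨0, by rintro t ⟨z, -, rfl⟩; exact hdnn x z⟩ (mem_image_of_mem _ hy)

theorem dSet_zero (hdnn : ∀ x y, 0 ≤ d x y) (hd0 : ∀ x, d x x = 0) {x : X} {U : Set X}
    (hx : x ∈ U) : dSet d x U = 0 :=
  le_antisymm (by simpa [hd0 x] using dSet_le hdnn (x := x) hx) (dSet_nonneg hdnn x U)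

theorem dSet_lip (hdnn : ∀ x y, 0 ≤ d x y) (htri : ∀ x y z, d x z ≤ d x y + d y z)
    {x y : X} {U : Set X} (hU : U.Nonempty) :
    dSet d x U ≤ d x y + dSet d y U := by
  rw [← sub_le_iff_le_add']
  refine le_csInf (hU.image _) ?_
  rintro t ⟨z, hz, rfl⟩
  have := (dSet_le hdnn hz : dSet d x U ≤ d x z).trans (htri x y z)
  linarith

theorem dSet_lt {x : X} {U : Set X} {r : ℝ} (hU : U.Nonempty) (h : dSet d x U < r) :
    ∃ y ∈ U, d x y ≤ r := by
  obtain ⟨t, ⟨y, hy, rfl⟩, ht⟩ := exists_lt_of_csInf_lt (hU.image _) h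
  exact ⟨y, hy, ht.le⟩

theorem bump_nonneg (r : ℝ) (U : Set X) (x : X) : 0 ≤ bump d r U x := le_max_left _ _

theorem bump_le_one (hdnn : ∀ x y, 0 ≤ d x y) {r : ℝ} (hr : 0 < r) (U : Set X) (x : X) :
    bump d r U x ≤ 1 :=
  max_le zero_le_one (by
    have h1 := dSet_nonneg hdnn x U
    have : 0 ≤ dSet d x U / r := div_nonneg h1 hr.le
    linarith)

theorem bump_eq_one (hdnn : ∀ x y, 0 ≤ d x y) (hd0 : ∀ x, d x x = 0) {r : ℝ} {U : Set X}
    {x : X} (hx : x ∈ U) : bump d r U x = 1 := by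
  unfold bump
  rw [dSet_zero hdnn hd0 hx]
  norm_num

theorem bump_ne_zero {r : ℝ} (hr : 0 < r) {U : Set X} {x : X} (hU : U.Nonempty)
    (h : bump d r U x ≠ 0) : ∃ y ∈ U, d x y ≤ r := by
  have h1 : dSet d x U < r := by
    by_contra hc
    push_neg at hc
    have h2 : 1 ≤ dSet d x U / r := (one_le_div hr).2 hc
    exact h (max_eq_left (by linarith))
  exact dSet_lt hU h1

theorem bump_lip (hdnn : ∀ x y, 0 ≤ d x y) (hsymm : ∀ x y, d x y = d y x)
    (htri : ∀ x y z, d x z ≤ d x y + d y z) {r : ℝ} (hr : 0 < r) {U : Set X}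
    (hU : U.Nonempty) (x y : X) :
    |bump d r U x - bump d r U y| ≤ d x y / r := by
  have h1 : |bump d r U x - bump d r U y| ≤ |(1 - dSet d x U / r) - (1 - dSet d y U / r)| := by
    simpa [bump, max_comm] using
      abs_max_sub_max_le_abs (1 - dSet d x U / r) (1 - dSet d y U / r) 0
  have h2 : (1 - dSet d x U / r) - (1 - dSet d y U / r) = (dSet d y U - dSet d x U) / r := by
    ring
  refine h1.trans ?_
  rw [h2, abs_div, abs_of_pos hr]
  have hub : |dSet d y U - dSet d x U| ≤ d x y := by
    rw [abs_sub_le_iff]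
    constructor
    · have := dSet_lip hdnn htri (x := y) (y := x) hU
      rw [hsymm y x] at this
      linarith
    · have := dSet_lip hdnn htri (x := x) (y := y) hU
      linarith
  gcongr

end Aux

theorem aux_embedding {X : Type*} [Countable X] (d : X → X → ℝ) (x₀ : X)
    (hdnn : ∀ x y, 0 ≤ d x y) (hd0 : ∀ x, d x x = 0)
    (hsymm : ∀ x y, d x y = d y x) (htri : ∀ x y z, d x z ≤ d x y + d y z)
    (n : ℕ) (hAs : AsdimLE d n) :
    ∃ f : X → lp (fun _ : ℕ => ℝ) 2, ∃ ρ₁ ρ₂ : ℝ → ℝ,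
      Monotone ρ₁ ∧ Monotone ρ₂ ∧ Tendsto ρ₁ atTop atTop ∧
      ∀ x y : X, ρ₁ (d x y) ≤ dist (f x) (f y) ∧
        dist (f x) (f y) ≤ ρ₂ (d x y) := by
  classical
  have H : ∀ k : ℕ, ∃ (𝒰 : Set (Set X)) (B : ℝ), 0 ≤ B ∧
      (∀ x : X, ∃ U ∈ 𝒰, x ∈ U) ∧
      (∀ U ∈ 𝒰, ∀ x ∈ U, ∀ y ∈ U, d x y ≤ B) ∧
      (∀ x : X, {U | U ∈ 𝒰 ∧ ∃ y ∈ U, d x y ≤ (2:ℝ)^k}.Finite ∧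
        {U | U ∈ 𝒰 ∧ ∃ y ∈ U, d x y ≤ (2:ℝ)^k}.ncard ≤ n + 1) := by
    intro k
    obtain ⟨𝒰, hcov, ⟨B, hB⟩, hmult⟩ := hAs ((2:ℝ)^k) (by positivity)
    exact ⟨𝒰, max B 0, le_max_right _ _, hcov,
      fun U hU x hx y hy => (hB U hU x hx y hy).trans (le_max_left _ _), hmult⟩
  choose 𝒰 B hB0 hcov hdiam hmult using H
  choose V hV𝒰 hVmem using hcov
  -- countability of the index type
  have hcnt : ∀ k : ℕ, Countable {U : Set X // U ∈ 𝒰 k ∧ U.Nonempty} := by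
    intro k
    have hsub : {U : Set X | U ∈ 𝒰 k ∧ U.Nonempty} ⊆
        ⋃ x : X, {U | U ∈ 𝒰 k ∧ ∃ y ∈ U, d x y ≤ (2:ℝ)^k} := by
      rintro U ⟨hU, z, hz⟩
      exact mem_iUnion.2 ⟨z, hU, z, hz, by rw [hd0 z]; positivity⟩
    have : {U : Set X | U ∈ 𝒰 k ∧ U.Nonempty}.Countable :=
      (countable_iUnion fun x => ((hmult k x).1).countable).mono hsub
    exact this.to_subtype
  haveI := hcnt
  set I := (k : ℕ) × {U : Set X // U ∈ 𝒰 k ∧ U.Nonempty} with hI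
  obtain ⟨ι, hι⟩ := exists_injective_nat I
  -- the coordinate functions
  set Φ : I → X → ℝ := fun i x => bump d ((2:ℝ)^i.1) i.2.1 x with hΦ
  set D : X → X → I → ℝ := fun x y i => (Φ i x - Φ i y)^2 with hD
  have hDnn : ∀ x y i, 0 ≤ D x y i := fun x y i => sq_nonneg _
  -- per-scale estimate
  have key : ∀ (x y : X) (k : ℕ),
      Summable (fun U : {U : Set X // U ∈ 𝒰 k ∧ U.Nonempty} => D x y ⟨k, U⟩) ∧
      (∑' U : {U : Set X // U ∈ 𝒰 k ∧ U.Nonempty}, D x y ⟨k, U⟩)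
        ≤ (2*((n:ℝ)+1)) * min 1 ((d x y / 2^k)^2) := by
    intro x y k
    have hrpos : (0:ℝ) < 2^k := by positivity
    set q : {U : Set X // U ∈ 𝒰 k ∧ U.Nonempty} → ℝ := fun U => D x y ⟨k, U⟩ with hq
    set s : Set {U : Set X // U ∈ 𝒰 k ∧ U.Nonempty} := {U | q U ≠ 0} with hs
    have himg : Subtype.val '' s ⊆ {U | U ∈ 𝒰 k ∧ ∃ z ∈ U, d x z ≤ (2:ℝ)^k} ∪
        {U | U ∈ 𝒰 k ∧ ∃ z ∈ U, d y z ≤ (2:ℝ)^k} := by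
      rintro _ ⟨U, hUs, rfl⟩
      have hne : bump d ((2:ℝ)^k) U.1 x ≠ bump d ((2:ℝ)^k) U.1 y := by
        intro hcon
        apply hUs
        show q U = 0
        simp only [hq, hD, hΦ, hcon]
        ring
      by_cases hx0 : bump d ((2:ℝ)^k) U.1 x = 0
      · have hy0 : bump d ((2:ℝ)^k) U.1 y ≠ 0 := fun h => hne (hx0.trans h.symm)
        exact Or.inr ⟨U.2.1, bump_ne_zero hrpos U.2.2 hy0⟩
      · exact Or.inl ⟨U.2.1, bump_ne_zero hrpos U.2.2 hx0⟩
    have hsfin : s.Finite :=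
      Finite.of_finite_image
        ((((hmult k x).1.union (hmult k y).1).subset himg)) Subtype.val_injective.injOn
    have hcard : hsfin.toFinset.card ≤ 2*(n+1) := by
      rw [← Set.ncard_eq_toFinset_card _ hsfin]
      calc s.ncard = (Subtype.val '' s).ncard :=
            (ncard_image_of_injective s Subtype.val_injective).symm
        _ ≤ ({U | U ∈ 𝒰 k ∧ ∃ z ∈ U, d x z ≤ (2:ℝ)^k} ∪
              {U | U ∈ 𝒰 k ∧ ∃ z ∈ U, d y z ≤ (2:ℝ)^k}).ncard :=
            ncard_le_ncard himg ((hmult k x).1.union (hmult k y).1)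
        _ ≤ {U | U ∈ 𝒰 k ∧ ∃ z ∈ U, d x z ≤ (2:ℝ)^k}.ncard +
              {U | U ∈ 𝒰 k ∧ ∃ z ∈ U, d y z ≤ (2:ℝ)^k}.ncard := ncard_union_le _ _
        _ ≤ (n+1) + (n+1) := add_le_add (hmult k x).2 (hmult k y).2
        _ = 2*(n+1) := by ring
    set mv : ℝ := min 1 ((d x y / 2^k)^2) with hmv
    have hmnn : 0 ≤ mv := le_min zero_le_one (sq_nonneg _)
    have hterm : ∀ U, q U ≤ mv := by
      intro U
      have h1 : |bump d ((2:ℝ)^k) U.1 x - bump d ((2:ℝ)^k) U.1 y| ≤ 1 := by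
        rw [abs_le]
        constructor
        · have ha := bump_le_one hdnn hrpos U.1 y
          have hb := bump_nonneg (d := d) ((2:ℝ)^k) U.1 x
          linarith
        · have ha := bump_le_one hdnn hrpos U.1 x
          have hb := bump_nonneg (d := d) ((2:ℝ)^k) U.1 y
          linarith
      have h2 := bump_lip hdnn hsymm htri hrpos U.2.2 x y
      have hqe : q U = |bump d ((2:ℝ)^k) U.1 x - bump d ((2:ℝ)^k) U.1 y|^2 := by
        rw [sq_abs]
      rw [hqe, hmv]
      apply le_min
      · simpa using pow_le_pow_left₀ (abs_nonneg _) h1 2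
      · exact pow_le_pow_left₀ (abs_nonneg _) h2 2
    have hvanish : ∀ U ∉ hsfin.toFinset, q U = 0 := by
      intro U hU
      by_contra hne
      exact hU (hsfin.mem_toFinset.2 hne)
    refine ⟨summable_of_ne_finset_zero hvanish, ?_⟩
    rw [tsum_eq_sum hvanish]
    calc ∑ U ∈ hsfin.toFinset, q U ≤ hsfin.toFinset.card • mv :=
          Finset.sum_le_card_nsmul _ _ _ (fun U _ => hterm U)
      _ = (hsfin.toFinset.card : ℝ) * mv := nsmul_eq_mul _ _
      _ ≤ (2*((n:ℝ)+1)) * mv := by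
          apply mul_le_mul_of_nonneg_right _ hmnn
          calc (hsfin.toFinset.card : ℝ) ≤ ((2*(n+1) : ℕ) : ℝ) := by exact_mod_cast hcard
            _ = 2*((n:ℝ)+1) := by push_cast; ring
  -- geometric comparison
  have hw : ∀ t : ℝ, Summable (fun k : ℕ => (2*((n:ℝ)+1)) * min 1 ((t/2^k)^2)) := by
    intro t
    apply Summable.of_nonneg_of_le
        (fun k => mul_nonneg (by positivity) (le_min zero_le_one (sq_nonneg _)))
        (fun k => ?_)
        (((summable_geometric_of_lt_one (by norm_num) (by norm_num : (1/4:ℝ) < 1)).mul_left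
          ((2*((n:ℝ)+1)) * t^2)))
    have h4 : ((t/2^k)^2) = t^2 * (1/4)^k := by
      rw [div_pow, ← pow_mul]
      rw [show (1/4 : ℝ) = (1/2)^2 by norm_num, ← pow_mul]
      rw [div_pow, one_pow]
      rw [mul_comm 2 k, div_eq_mul_inv, ← inv_pow]
      rw [inv_pow, one_div]
    calc (2*((n:ℝ)+1)) * min 1 ((t/2^k)^2) ≤ (2*((n:ℝ)+1)) * ((t/2^k)^2) := by
          apply mul_le_mul_of_nonneg_left (min_le_right _ _) (by positivity)
      _ = 2*((n:ℝ)+1) * t^2 * (1/4)^k := by rw [h4]; ring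
  -- full summability
  have hsum : ∀ x y, Summable (D x y) := by
    intro x y
    refine (summable_sigma_of_nonneg (hDnn x y)).2 ⟨fun k => (key x y k).1, ?_⟩
    exact Summable.of_nonneg_of_le (fun k => tsum_nonneg fun U => hDnn x y _)
      (fun k => (key x y k).2) (hw _)
  have htsum_le : ∀ x y, (∑' i, D x y i) ≤
      ∑' k : ℕ, (2*((n:ℝ)+1)) * min 1 ((d x y/2^k)^2) := by
    intro x y
    rw [(hsum x y).tsum_sigma]
    exact Summable.tsum_le_tsum (fun k => (key x y k).2)
      (Summable.of_nonneg_of_le (fun k => tsum_nonneg fun U => hDnn x y _)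
        (fun k => (key x y k).2) (hw _)) (hw _)
  -- the map into ℓ²
  set F : X → ℕ → ℝ := fun x => Function.extend ι (fun i => Φ i x - Φ i x₀) 0 with hF
  have hFdiff : ∀ x y m, (F x m - F y m)^2 = Function.extend ι (D x y) 0 m := by
    intro x y m
    by_cases h : ∃ i, ι i = m
    · obtain ⟨i, rfl⟩ := h
      simp only [hF]
      rw [hι.extend_apply, hι.extend_apply, hι.extend_apply]
      simp only [hD]
      ring
    · simp only [hF]
      rw [extend_apply' _ _ _ h, extend_apply' _ _ _ h, extend_apply' _ _ _ h]
      simp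
  have hFzero : ∀ m, F x₀ m = 0 := by
    intro m
    by_cases h : ∃ i, ι i = m
    · obtain ⟨i, rfl⟩ := h
      simp only [hF]
      rw [hι.extend_apply]
      ring
    · simp only [hF]
      rw [extend_apply' _ _ _ h]
      rfl
  have habs : ∀ a : ℝ, ‖a‖ ^ ((2:ℝ≥0∞).toReal) = a ^ 2 := by
    intro a
    rw [ENNReal.toReal_ofNat, Real.rpow_two, Real.norm_eq_abs, sq_abs]
  have hmem : ∀ x, Memℓp (F x) 2 := by
    intro x
    apply memℓp_gen
    have heq : (fun m => ‖F x m‖ ^ ((2:ℝ≥0∞).toReal)) = Function.extend ι (D x x₀) 0 := by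
      funext m
      rw [habs]
      calc (F x m)^2 = (F x m - F x₀ m)^2 := by rw [hFzero m]; ring
        _ = Function.extend ι (D x x₀) 0 m := hFdiff x x₀ m
    rw [heq]
    exact (summable_extend_zero hι).2 (hsum x x₀)
  set f : X → lp (fun _ : ℕ => ℝ) 2 := fun x => ⟨F x, hmem x⟩ with hf
  have hcoe : ∀ x m, (f x : ∀ _ : ℕ, ℝ) m = F x m := fun x m => rfl
  have hdist : ∀ x y, (dist (f x) (f y))^2 = ∑' i, D x y i := by
    intro x y
    rw [dist_eq_norm]
    have hnorm := lp.norm_rpow_eq_tsum (p := 2)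
      (by rw [ENNReal.toReal_ofNat]; norm_num) (f x - f y)
    calc ‖f x - f y‖^2 = ‖f x - f y‖ ^ ((2:ℝ≥0∞).toReal) := by
          rw [ENNReal.toReal_ofNat, Real.rpow_two]
      _ = ∑' m, ‖(f x - f y : ∀ _ : ℕ, ℝ) m‖ ^ ((2:ℝ≥0∞).toReal) := hnorm
      _ = ∑' m, (F x m - F y m)^2 := by
          refine tsum_congr fun m => ?_
          rw [habs]
          rfl
      _ = ∑' m, Function.extend ι (D x y) 0 m := tsum_congr fun m => hFdiff x y m
      _ = ∑' i, D x y i := tsum_extend_zero hι _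
  -- upper control function
  set ρ₂ : ℝ → ℝ := fun t =>
    Real.sqrt (∑' k : ℕ, (2*((n:ℝ)+1)) * min 1 ((max t 0/2^k)^2)) with hρ₂
  have hρ₂mono : Monotone ρ₂ := by
    intro a b hab
    apply Real.sqrt_le_sqrt
    refine Summable.tsum_le_tsum (fun k => ?_) (hw _) (hw _)
    apply mul_le_mul_of_nonneg_left _ (by positivity)
    apply min_le_min le_rfl
    have h1 : max a 0 ≤ max b 0 := max_le_max hab le_rfl
    have h2 : (0:ℝ) ≤ max a 0 / 2^k := by positivity
    exact pow_le_pow_left₀ h2 (by gcongr) 2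
  have hupper : ∀ x y, dist (f x) (f y) ≤ ρ₂ (d x y) := by
    intro x y
    have h1 : (dist (f x) (f y))^2 ≤
        ∑' k : ℕ, (2*((n:ℝ)+1)) * min 1 ((max (d x y) 0/2^k)^2) := by
      rw [hdist, max_eq_left (hdnn x y)]
      exact htsum_le x y
    calc dist (f x) (f y) = Real.sqrt ((dist (f x) (f y))^2) :=
          (Real.sqrt_sq dist_nonneg).symm
      _ ≤ ρ₂ (d x y) := Real.sqrt_le_sqrt h1
  -- lower control function
  set Kset : ℝ → Set ℕ := fun t => {k : ℕ | B k + 2^(k+1) < t} with hKset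
  have hKfin : ∀ t, (Kset t).Finite := by
    intro t
    obtain ⟨mn, hmn⟩ := exists_nat_ge t
    apply (Set.finite_Iio mn).subset
    intro k hk
    simp only [mem_Iio]
    have h1 : (k:ℝ) < 2^k := by exact_mod_cast k.lt_two_pow_self
    have h2 : (2:ℝ)^k ≤ 2^(k+1) := by
      apply pow_le_pow_right₀ (by norm_num) (Nat.le_succ k)
    have h3 : B k + 2^(k+1) < t := hk
    have h4 := hB0 k
    have : (k:ℝ) < (mn:ℝ) := by linarith
    exact_mod_cast this
  set ρ₁ : ℝ → ℝ := fun t => Real.sqrt (((Kset t).ncard : ℝ)) with hρ₁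
  have hρ₁mono : Monotone ρ₁ := by
    intro a b hab
    apply Real.sqrt_le_sqrt
    have hsub : Kset a ⊆ Kset b := fun k hk => lt_of_lt_of_le hk hab
    exact_mod_cast ncard_le_ncard hsub (hKfin b)
  have hlowsum : ∀ x y, ((Kset (d x y)).ncard : ℝ) ≤ ∑' i, D x y i := by
    intro x y
    set e : ℕ → I := fun k => ⟨k, ⟨V k x, hV𝒰 k x, ⟨x, hVmem k x⟩⟩⟩ with he
    have heinj : Injective e := fun a b hab => congrArg Sigma.fst hab
    have hval : ∀ k ∈ (hKfin (d x y)).toFinset, D x y (e k) = 1 := by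
      intro k hk
      rw [Set.Finite.mem_toFinset] at hk
      have hk' : B k + 2^(k+1) < d x y := hk
      have h1 : Φ (e k) x = 1 := bump_eq_one hdnn hd0 (hVmem k x)
      have h0 : Φ (e k) y = 0 := by
        by_contra hc
        obtain ⟨z, hz, hdz⟩ := bump_ne_zero (by positivity) ⟨x, hVmem k x⟩ hc
        have hxz : d x z ≤ B k := hdiam k (V k x) (hV𝒰 k x) x (hVmem k x) z hz
        have htr : d x y ≤ d x z + d z y := htri x z y
        have hzy : d z y = d y z := hsymm z y
        have h2k : (2:ℝ)^k < 2^(k+1) := by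
          apply pow_lt_pow_right₀ (by norm_num) (Nat.lt_succ_self k)
        linarith
      simp only [hD]
      rw [h1, h0]
      norm_num
    calc ((Kset (d x y)).ncard : ℝ) = ((hKfin (d x y)).toFinset.card : ℝ) := by
          rw [Set.ncard_eq_toFinset_card _ (hKfin (d x y))]
      _ = ∑ k ∈ (hKfin (d x y)).toFinset, (1:ℝ) := by
          rw [Finset.sum_const, nsmul_eq_mul, mul_one]
      _ = ∑ k ∈ (hKfin (d x y)).toFinset, D x y (e k) :=
          Finset.sum_congr rfl (fun k hk => (hval k hk).symm)
      _ = ∑ i ∈ (hKfin (d x y)).toFinset.image e, D x y i :=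
          (Finset.sum_image (fun a _ b _ h => heinj h)).symm
      _ ≤ ∑' i, D x y i := Summable.sum_le_tsum _ (fun i _ => hDnn x y i) (hsum x y)
  have hlower : ∀ x y, ρ₁ (d x y) ≤ dist (f x) (f y) := by
    intro x y
    calc ρ₁ (d x y) = Real.sqrt (((Kset (d x y)).ncard : ℝ)) := rfl
      _ ≤ Real.sqrt ((dist (f x) (f y))^2) := by
          apply Real.sqrt_le_sqrt
          rw [hdist]
          exact hlowsum x y
      _ = dist (f x) (f y) := Real.sqrt_sq dist_nonneg
  have htend : Tendsto ρ₁ atTop atTop := by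
    rw [tendsto_atTop_atTop]
    intro b
    obtain ⟨m, hm⟩ := exists_nat_ge ((max b 0)^2)
    refine ⟨1 + ∑ k ∈ Finset.range m, (B k + 2^(k+1)), fun t ht => ?_⟩
    have hsub : (↑(Finset.range m) : Set ℕ) ⊆ Kset t := by
      intro k hk
      simp only [Finset.coe_range, mem_Iio] at hk
      have hterm : ∀ j ∈ Finset.range m, (0:ℝ) ≤ B j + 2^(j+1) := by
        intro j _
        have := hB0 j
        positivity
      have hs := Finset.single_le_sum hterm (Finset.mem_range.2 hk)
      show B k + 2^(k+1) < t
      linarith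
    have hcard : (m:ℝ) ≤ ((Kset t).ncard : ℝ) := by
      have := ncard_le_ncard hsub (hKfin t)
      rw [ncard_coe_finset, Finset.card_range] at this
      exact_mod_cast this
    calc b ≤ max b 0 := le_max_left _ _
      _ = Real.sqrt ((max b 0)^2) := (Real.sqrt_sq (le_max_right _ _)).symm
      _ ≤ Real.sqrt (((Kset t).ncard : ℝ)) := Real.sqrt_le_sqrt (hm.trans hcard)
      _ = ρ₁ t := rfl
  exact ⟨f, ρ₁, ρ₂, hρ₁mono, hρ₂mono, htend, fun x y => ⟨hlower x y, hupper x y⟩⟩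

/-- A countable group with a proper length metric of finite asymptotic dimension
coarsely embeds into the Hilbert space `ℓ²(ℕ)`. -/
theorem coarse_embedding_into_l2_of_finite_asdim
    (G : Type*) [Group G] [Countable G] (l : G → ℝ)
    (hl0 : ∀ g : G, 0 ≤ l g) (hlinv : ∀ g : G, l g⁻¹ = l g)
    (hlsub : ∀ g h : G, l (g * h) ≤ l g + l h)
    (hlzero : ∀ g : G, l g = 0 ↔ g = 1)
    (hlproper : ∀ R : ℝ, 0 < R → {g : G | l g ≤ R}.Finite)
    (hasdim : ∃ n : ℕ, AsdimLE (fun g h : G => l (g⁻¹ * h)) n) :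
    ∃ f : G → lp (fun _ : ℕ => ℝ) 2, ∃ ρ₁ ρ₂ : ℝ → ℝ,
      Monotone ρ₁ ∧ Monotone ρ₂ ∧ Tendsto ρ₁ atTop atTop ∧
      ∀ g h : G, ρ₁ (l (g⁻¹ * h)) ≤ dist (f g) (f h) ∧
        dist (f g) (f h) ≤ ρ₂ (l (g⁻¹ * h)) := by
  obtain ⟨n, hn⟩ := hasdim
  exact aux_embedding (fun g h : G => l (g⁻¹ * h)) 1
    (fun x y => hl0 _)
    (fun x => by show l (x⁻¹ * x) = 0; simpa using (hlzero 1).2 rfl)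
    (fun x y => by show l (x⁻¹ * y) = l (y⁻¹ * x); rw [← hlinv (x⁻¹ * y)]; congr 1; group)
    (fun x y z => by
      show l (x⁻¹ * z) ≤ l (x⁻¹ * y) + l (y⁻¹ * z)
      have := hlsub (x⁻¹ * y) (y⁻¹ * z)
      simpa [mul_assoc] using this)
    n hn
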